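/- Let f and g be monic polynomials over F_q of degrees m and n. Then the composed sum f ⊕ g is irreducible over F_q if and only if f and g are both irreducible over F_q and gcd(m, n) = 1. -/

import Mathlib

open Polynomial

/-- The multiset of roots of `f` in the algebraic closure of `F`. -/
noncomputable def acRoots (F : Type*) [Field F] (f : F[X]) : Multiset (AlgebraicClosure F) :=
  (f.map (algebraMap F (AlgebraicClosure F))).roots

/-- Composed sum: `(f ⊕ g)(x) = ∏_α ∏_β (x - (α + β))` over all roots `α` of `f`
and `β` of `g` in the algebraic closure. -/
noncomputable def compAdd (F : Type*) [Field F] (f g : F[X]) : (AlgebraicClosure F)[X] :=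
  ((acRoots F f).bind fun α => (acRoots F g).map fun β => X - C (α + β)).prod

section BCaux

private lemma pow_fix_pow {M : Type*} [Monoid M] {x : M} {s : ℕ} (h : x ^ s = x) :
    ∀ k, x ^ s ^ k = x
  | 0 => by simp
  | k + 1 => by rw [pow_succ, pow_mul, pow_fix_pow h k, h]

private lemma pow_sub_one_dvd_iff {q d k : ℕ} (hq : 2 ≤ q) (hd : 0 < d) :
    q ^ d - 1 ∣ q ^ k - 1 ↔ d ∣ k := by
  constructor
  · intro h
    set t := k / d with htdef
    set r := k % d with hrdef
    have hk : d * t + r = k := Nat.div_add_mod k d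
    have h1d : 1 ≤ q ^ d := Nat.one_le_pow _ _ (by omega)
    have h1k : 1 ≤ q ^ k := Nat.one_le_pow _ _ (by omega)
    have hzi : ((q : ℤ) ^ d - 1) ∣ ((q : ℤ) ^ k - 1) := by
      have h2 := Int.natCast_dvd_natCast.mpr h
      rwa [Nat.cast_sub h1d, Nat.cast_sub h1k, Nat.cast_pow, Nat.cast_pow, Nat.cast_one] at h2
    have hdt : ((q : ℤ) ^ d - 1) ∣ ((q : ℤ) ^ (d * t) - 1) := by
      simpa [pow_mul] using sub_dvd_pow_sub_pow ((q : ℤ) ^ d) 1 t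
    have hr' : ((q : ℤ) ^ d - 1) ∣ ((q : ℤ) ^ r - 1) := by
      have heq : (q : ℤ) ^ r - 1 = ((q : ℤ) ^ k - 1) - (q : ℤ) ^ r * ((q : ℤ) ^ (d * t) - 1) := by
        rw [← hk, pow_add]; ring
      rw [heq]
      exact dvd_sub hzi (Dvd.dvd.mul_left hdt _)
    have hrd : r < d := Nat.mod_lt _ hd
    have hr1 : (q : ℤ) ^ r = 1 := by
      have h1r : (1 : ℤ) ≤ (q : ℤ) ^ r := one_le_pow₀ (by exact_mod_cast hq.trans' one_le_two)
      rcases eq_or_lt_of_le h1r with heq | hlt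
      · omega
      · exfalso
        have hle := Int.le_of_dvd (by omega) hr'
        have hltp : (q : ℤ) ^ r < (q : ℤ) ^ d := by
          apply pow_lt_pow_right₀ (by exact_mod_cast hq) hrd
        omega
    have hrnat : q ^ r = 1 := by exact_mod_cast hr1
    have hr0 : r = 0 := by
      by_contra hr0
      have := Nat.one_lt_pow hr0 (by omega : 1 < q)
      omega
    exact Nat.dvd_of_mod_eq_zero hr0
  · rintro ⟨t, rfl⟩
    simpa [pow_mul] using Nat.sub_dvd_pow_sub_pow (q ^ d) 1 t

private def frobFixed (K : Type*) [Field K] (p : ℕ) [Fact p.Prime] [CharP K p] (e : ℕ) :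
    Subfield K where
  carrier := {y | y ^ p ^ e = y}
  mul_mem' := fun ha hb => by
    simp only [Set.mem_setOf_eq] at *; rw [mul_pow, ha, hb]
  one_mem' := by simp
  add_mem' := fun ha hb => by
    simp only [Set.mem_setOf_eq] at *; rw [add_pow_char_pow, ha, hb]
  zero_mem' := by
    simp only [Set.mem_setOf_eq]
    exact zero_pow (pow_ne_zero _ (Nat.Prime.ne_zero Fact.out))
  neg_mem' := fun ha => by
    simp only [Set.mem_setOf_eq] at *
    rw [neg_pow, ha, neg_one_pow_char_pow, neg_one_mul]
  inv_mem' := fun a ha => by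
    simp only [Set.mem_setOf_eq] at *; rw [inv_pow, ha]

variable {Fq : Type*} [Field Fq] [Fintype Fq]

open IntermediateField in
private lemma pow_card_pow_eq_iff (x : AlgebraicClosure Fq) (k : ℕ) :
    x ^ (Fintype.card Fq) ^ k = x ↔ (minpoly Fq x).natDegree ∣ k := by
  classical
  set q := Fintype.card Fq with hqdef
  have hq2 : 2 ≤ q := Fintype.one_lt_card
  set p := ringChar Fq with hpdef
  haveI : CharP Fq p := ringChar.charP Fq
  have hp : p.Prime := CharP.char_is_prime Fq p
  haveI := Fact.mk hp
  haveI : CharP (AlgebraicClosure Fq) p := charP_of_injective_algebraMap (algebraMap Fq (AlgebraicClosure Fq)).injective p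
  obtain ⟨s, -, hcard⟩ := FiniteField.card Fq p
  have hx : IsIntegral Fq x := Algebra.IsIntegral.isIntegral x
  set d := (minpoly Fq x).natDegree with hd
  have hdpos : 0 < d := minpoly.natDegree_pos hx
  haveI : FiniteDimensional Fq Fq⟮x⟯ := IntermediateField.adjoin.finiteDimensional hx
  haveI : Finite Fq⟮x⟯ := Module.finite_of_finite Fq
  haveI : Fintype Fq⟮x⟯ := Fintype.ofFinite _
  have hcardL : Fintype.card Fq⟮x⟯ = q ^ d := by
    rw [Module.card_eq_pow_finrank (K := Fq), IntermediateField.adjoin.finrank hx]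
  have hxd : x ^ q ^ d = x := by
    have h := FiniteField.pow_card (IntermediateField.AdjoinSimple.gen Fq x)
    rw [hcardL] at h
    have h2 := congrArg (algebraMap Fq⟮x⟯ (AlgebraicClosure Fq)) h
    simpa [map_pow, IntermediateField.AdjoinSimple.algebraMap_gen] using h2
  constructor
  · intro hxk
    have hqk : q ^ k = p ^ ((s : ℕ) * k) := by rw [hqdef, hcard, ← pow_mul]
    set S := frobFixed (AlgebraicClosure Fq) p (s * k) with hS
    have halg : ∀ c : Fq, algebraMap Fq (AlgebraicClosure Fq) c ∈ S := by
      intro c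
      show (algebraMap Fq (AlgebraicClosure Fq) c) ^ p ^ (s * k) = algebraMap Fq (AlgebraicClosure Fq) c
      rw [← map_pow, ← hqk, pow_fix_pow (FiniteField.pow_card c) k]
    set T := S.toIntermediateField halg with hT
    have hxT : x ∈ T := by
      show x ^ p ^ (s * k) = x
      rw [← hqk]; exact hxk
    have hLT : Fq⟮x⟯ ≤ T := by
      rw [IntermediateField.adjoin_le_iff]
      intro y hy
      rw [Set.mem_singleton_iff] at hy
      subst hy; exact hxT
    have hfix : ∀ y : Fq⟮x⟯, (y : AlgebraicClosure Fq) ^ q ^ k = (y : AlgebraicClosure Fq) := by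
      intro y
      have hmem : (y : AlgebraicClosure Fq) ∈ T := hLT y.2
      have : (y : AlgebraicClosure Fq) ^ p ^ (s * k) = (y : AlgebraicClosure Fq) := hmem
      rwa [← hqk] at this
    obtain ⟨g, hg⟩ := IsCyclic.exists_generator (α := (Fq⟮x⟯)ˣ)
    have hord : orderOf g = q ^ d - 1 := by
      rw [orderOf_eq_card_of_forall_mem_zpowers hg, Nat.card_units, Nat.card_eq_fintype_card, hcardL]
    have hgfix : ((g : Fq⟮x⟯) : AlgebraicClosure Fq) ^ q ^ k = ((g : Fq⟮x⟯) : AlgebraicClosure Fq) := hfix _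
    have hgfixL : (g : Fq⟮x⟯) ^ q ^ k = (g : Fq⟮x⟯) := by exact_mod_cast hgfix
    have hgu : g ^ (q ^ k - 1) = 1 := by
      have h3 : g ^ q ^ k = g := Units.ext (by push_cast; exact hgfixL)
      have h4 : g ^ (q ^ k - 1) * g = g := by
        rw [← pow_succ, Nat.sub_add_cancel (Nat.one_le_pow _ _ (by omega))]
        exact h3
      have := mul_right_cancel (b := g) (h4.trans (one_mul g).symm)
      exact this
    have hdvd1 : q ^ d - 1 ∣ q ^ k - 1 := hord ▸ orderOf_dvd_of_pow_eq_one hgu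
    exact (pow_sub_one_dvd_iff hq2 hdpos).mp hdvd1
  · rintro ⟨t, rfl⟩
    have h5 := pow_fix_pow hxd t
    rwa [← pow_mul] at h5

private lemma ac_add_pow (u v : AlgebraicClosure Fq) (j : ℕ) :
    (u + v) ^ (Fintype.card Fq) ^ j
      = u ^ (Fintype.card Fq) ^ j + v ^ (Fintype.card Fq) ^ j := by
  set p := ringChar Fq with hpdef
  haveI : CharP Fq p := ringChar.charP Fq
  have hp : p.Prime := CharP.char_is_prime Fq p
  haveI := Fact.mk hp
  haveI : CharP (AlgebraicClosure Fq) p := charP_of_injective_algebraMap (algebraMap Fq (AlgebraicClosure Fq)).injective p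
  obtain ⟨s, -, hcard⟩ := FiniteField.card Fq p
  rw [hcard, ← pow_mul]
  exact add_pow_char_pow u v p _

private lemma ac_sub_pow (u v : AlgebraicClosure Fq) (j : ℕ) :
    (u - v) ^ (Fintype.card Fq) ^ j
      = u ^ (Fintype.card Fq) ^ j - v ^ (Fintype.card Fq) ^ j := by
  set p := ringChar Fq with hpdef
  haveI : CharP Fq p := ringChar.charP Fq
  have hp : p.Prime := CharP.char_is_prime Fq p
  haveI := Fact.mk hp
  haveI : CharP (AlgebraicClosure Fq) p := charP_of_injective_algebraMap (algebraMap Fq (AlgebraicClosure Fq)).injective p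
  obtain ⟨s, -, hcard⟩ := FiniteField.card Fq p
  rw [hcard, ← pow_mul]
  exact sub_pow_char_pow u v _

end BCaux

section BCcore
variable {Fq : Type*} [Field Fq] [Fintype Fq]

private lemma minpoly_add_natDegree {x y : AlgebraicClosure Fq} {m n : ℕ}
    (hm : (minpoly Fq x).natDegree = m) (hn : (minpoly Fq y).natDegree = n)
    (hco : Nat.Coprime m n) : (minpoly Fq (x + y)).natDegree = m * n := by
  classical
  set q := Fintype.card Fq with hqdef
  set p := ringChar Fq with hpdef
  haveI : CharP Fq p := ringChar.charP Fq
  have hp : p.Prime := CharP.char_is_prime Fq p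
  haveI := Fact.mk hp
  haveI : CharP (AlgebraicClosure Fq) p :=
    charP_of_injective_algebraMap (algebraMap Fq (AlgebraicClosure Fq)).injective p
  have hmpos : 0 < m := hm ▸ minpoly.natDegree_pos (Algebra.IsIntegral.isIntegral x)
  have hnpos : 0 < n := hn ▸ minpoly.natDegree_pos (Algebra.IsIntegral.isIntegral y)
  set k := (minpoly Fq (x + y)).natDegree with hk
  have h1 : (x + y) ^ q ^ k = x + y := (pow_card_pow_eq_iff _ _).mpr dvd_rfl
  have hxm : x ^ q ^ m = x := (pow_card_pow_eq_iff x m).mpr (by rw [hm])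
  have hyn : y ^ q ^ n = y := (pow_card_pow_eq_iff y n).mpr (by rw [hn])
  set c := x ^ q ^ k - x with hc
  have hcy : y ^ q ^ k = y - c := by
    have h2 : x ^ q ^ k + y ^ q ^ k = x + y := by rw [← ac_add_pow]; exact h1
    rw [hc]; linear_combination h2
  have hpowpow : ∀ (u : AlgebraicClosure Fq) (a b : ℕ),
      (u ^ q ^ a) ^ q ^ b = (u ^ q ^ b) ^ q ^ a := by
    intro u a b; rw [← pow_mul, ← pow_mul, mul_comm]
  have hcm : c ^ q ^ m = c := by
    rw [hc, ac_sub_pow, hpowpow x k m, hxm]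
  have hc' : c = y - y ^ q ^ k := by linear_combination hcy
  have hcn : c ^ q ^ n = c := by
    rw [hc', ac_sub_pow, hpowpow y k n, hyn]
  have hcdvd : (minpoly Fq c).natDegree ∣ 1 := by
    have d1 := (pow_card_pow_eq_iff c m).mp hcm
    have d2 := (pow_card_pow_eq_iff c n).mp hcn
    have d3 := Nat.dvd_gcd d1 d2
    rwa [Nat.Coprime.gcd_eq_one hco] at d3
  have hc1 : c ^ q = c := by
    have h3 := (pow_card_pow_eq_iff c 1).mpr hcdvd
    simpa using h3
  have hcj : ∀ j : ℕ, c ^ q ^ j = c := fun j => pow_fix_pow hc1 j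
  have hnc : ∀ j : ℕ, ((j : AlgebraicClosure Fq)) ^ q ^ k = (j : AlgebraicClosure Fq) := by
    intro j
    rw [← map_natCast (algebraMap Fq (AlgebraicClosure Fq)) j, ← map_pow,
      pow_fix_pow (FiniteField.pow_card (j : Fq)) k]
  have hx1 : x ^ q ^ k = x + c := by rw [hc]; ring
  have hxj : ∀ j : ℕ, x ^ q ^ (k * j) = x + j * c := by
    intro j; induction j with
    | zero => simp
    | succ i ih =>
      have he : q ^ (k * (i + 1)) = q ^ (k * i) * q ^ k := by
        rw [← pow_add, Nat.mul_succ]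
      rw [he, pow_mul, ih, ac_add_pow, hx1, mul_pow, hnc, hcj]
      push_cast; ring
  have hyj : ∀ j : ℕ, y ^ q ^ (k * j) = y - j * c := by
    intro j; induction j with
    | zero => simp
    | succ i ih =>
      have he : q ^ (k * (i + 1)) = q ^ (k * i) * q ^ k := by
        rw [← pow_add, Nat.mul_succ]
      rw [he, pow_mul, ih, ac_sub_pow, hcy, mul_pow, hnc, hcj]
      push_cast; ring
  have hmc : (m : AlgebraicClosure Fq) * c = 0 := by
    have h6 := hxj m
    have h7 : x ^ q ^ (k * m) = x :=
      (pow_card_pow_eq_iff x (k * m)).mpr (by rw [hm]; exact dvd_mul_left m k)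
    rw [h7] at h6
    linear_combination -h6
  have hnc0 : (n : AlgebraicClosure Fq) * c = 0 := by
    have h6 := hyj n
    have h7 : y ^ q ^ (k * n) = y :=
      (pow_card_pow_eq_iff y (k * n)).mpr (by rw [hn]; exact dvd_mul_left n k)
    rw [h7] at h6
    linear_combination h6
  have hc0 : c = 0 := by
    by_contra hne
    have h8 : (m : AlgebraicClosure Fq) = 0 := by
      rcases mul_eq_zero.mp hmc with h | h
      · exact h
      · exact absurd h hne
    have h9 : (n : AlgebraicClosure Fq) = 0 := by
      rcases mul_eq_zero.mp hnc0 with h | h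
      · exact h
      · exact absurd h hne
    have hpm : p ∣ m := (CharP.cast_eq_zero_iff (AlgebraicClosure Fq) p m).mp h8
    have hpn : p ∣ n := (CharP.cast_eq_zero_iff (AlgebraicClosure Fq) p n).mp h9
    have h10 := Nat.dvd_gcd hpm hpn
    rw [Nat.Coprime.gcd_eq_one hco] at h10
    exact hp.one_lt.ne' (Nat.dvd_one.mp h10)
  have hxk : x ^ q ^ k = x := by rw [hx1, hc0, add_zero]
  have hyk : y ^ q ^ k = y := by rw [hcy, hc0, sub_zero]
  have hmk : m ∣ k := by
    have := (pow_card_pow_eq_iff x k).mp hxk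
    rwa [hm] at this
  have hnk : n ∣ k := by
    have := (pow_card_pow_eq_iff y k).mp hyk
    rwa [hn] at this
  have hmnk : m * n ∣ k := Nat.Coprime.mul_dvd_of_dvd_of_dvd hco hmk hnk
  have hkmn : k ∣ m * n := by
    apply (pow_card_pow_eq_iff (x + y) (m * n)).mp
    rw [ac_add_pow,
      (pow_card_pow_eq_iff x (m * n)).mpr (by rw [hm]; exact dvd_mul_right m n),
      (pow_card_pow_eq_iff y (m * n)).mpr (by rw [hn]; exact dvd_mul_left n m)]
  exact Nat.dvd_antisymm hkmn hmnk
end BCcore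


section BCmain
variable {Fq : Type*} [Field Fq] [Fintype Fq]

private lemma aeval_eq_zero_of_mem_acRoots {f : Fq[X]} {α : AlgebraicClosure Fq}
    (h : α ∈ acRoots Fq f) : (aeval α) f = 0 := by
  rw [acRoots, mem_roots'] at h
  have := h.2
  rwa [IsRoot.def, eval_map, ← aeval_def] at this

end BCmain

/-- Brawley–Carlitz: `f ⊕ g` is irreducible over `F_q` iff `f` and `g` are irreducible
and their degrees are coprime.  `F` is the polynomial over `F_q` representing `f ⊕ g`. -/
theorem stmt4 (Fq : Type*) [Field Fq] [Fintype Fq] (f g : Fq[X]) (m n : ℕ)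
    (hf : f.Monic) (hg : g.Monic) (hm : f.natDegree = m) (hn : g.natDegree = n)
    (F : Fq[X]) (hF : F.map (algebraMap Fq (AlgebraicClosure Fq)) = compAdd Fq f g) :
    Irreducible F ↔ Irreducible f ∧ Irreducible g ∧ Nat.Coprime m n := by
  classical
  subst hm hn
  set q := Fintype.card Fq with hqdef
  set φ := algebraMap Fq (AlgebraicClosure Fq) with hφ
  have hsplitf : Splits (f.map φ) := IsAlgClosed.splits _
  have hsplitg : Splits (g.map φ) := IsAlgClosed.splits _
  have hcardf : Multiset.card (acRoots Fq f) = f.natDegree :=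
    hsplitf.natDegree_eq_card_roots.symm.trans (natDegree_map _)
  have hcardg : Multiset.card (acRoots Fq g) = g.natDegree :=
    hsplitg.natDegree_eq_card_roots.symm.trans (natDegree_map _)
  set t := ((acRoots Fq f).bind fun α => (acRoots Fq g).map fun β => X - C (α + β)) with ht
  have htm : ∀ P ∈ t, P.Monic := by
    intro P hP
    rw [ht, Multiset.mem_bind] at hP
    obtain ⟨α, -, hP⟩ := hP
    rw [Multiset.mem_map] at hP
    obtain ⟨β, -, rfl⟩ := hP
    exact monic_X_sub_C _
  have hca : compAdd Fq f g = t.prod := rfl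
  have hmonic : (compAdd Fq f g).Monic := by
    rw [hca]
    have := monic_multiset_prod_of_monic t id htm
    simpa using this
  have hdeg : (compAdd Fq f g).natDegree = f.natDegree * g.natDegree := by
    rw [hca, natDegree_multiset_prod_of_monic _ htm]
    have h1 : Multiset.map natDegree t = Multiset.replicate (Multiset.card t) 1 := by
      rw [Multiset.eq_replicate]
      refine ⟨by simp, fun b hb => ?_⟩
      rw [Multiset.mem_map] at hb
      obtain ⟨P, hP, rfl⟩ := hb
      rw [ht, Multiset.mem_bind] at hP
      obtain ⟨α, -, hP⟩ := hP
      rw [Multiset.mem_map] at hP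
      obtain ⟨β, -, rfl⟩ := hP
      exact natDegree_X_sub_C _
    rw [h1, Multiset.sum_replicate, smul_eq_mul, mul_one, ht, Multiset.card_bind]
    have h2 : (Multiset.map (Multiset.card ∘ fun α => Multiset.map
        (fun β => X - C (α + β)) (acRoots Fq g)) (acRoots Fq f))
        = Multiset.replicate (Multiset.card (acRoots Fq f)) (g.natDegree) := by
      rw [Multiset.eq_replicate]
      refine ⟨by simp, fun b hb => ?_⟩
      rw [Multiset.mem_map] at hb
      obtain ⟨α, -, rfl⟩ := hb
      rw [Function.comp_apply, Multiset.card_map, hcardg]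
    rw [h2, Multiset.sum_replicate, smul_eq_mul, hcardf]
  have hFmonic : F.Monic := by
    have h3 : (F.map φ).Monic := by rw [hF]; exact hmonic
    rwa [monic_map_iff] at h3
  have hFdeg : F.natDegree = f.natDegree * g.natDegree := by
    rw [← natDegree_map (p := F) φ, hF, hdeg]
  have hroot : ∀ α ∈ acRoots Fq f, ∀ β ∈ acRoots Fq g, aeval (α + β) F = 0 := by
    intro α hα β hβ
    have hmem : (X - C (α + β)) ∈ t :=
      Multiset.mem_bind.mpr ⟨α, hα, Multiset.mem_map.mpr ⟨β, hβ, rfl⟩⟩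
    have h4 : eval (α + β) (compAdd Fq f g) = 0 := by
      rw [hca, eval_multiset_prod]
      exact Multiset.prod_eq_zero
        (Multiset.mem_map.mpr ⟨X - C (α + β), hmem, by simp⟩)
    rw [aeval_def, ← eval_map, hF]
    exact h4
  constructor
  · intro hFirr
    have hmn : 0 < f.natDegree * g.natDegree := by
      rcases Nat.eq_zero_or_pos (f.natDegree * g.natDegree) with h0 | h
      · exfalso
        have h5 : F.natDegree = 0 := by rw [hFdeg, h0]
        have h6 : F = 1 := eq_one_of_monic_natDegree_zero hFmonic h5
        exact hFirr.not_isUnit (h6 ▸ isUnit_one)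
      · exact h
    have hmpos : 0 < f.natDegree := Nat.pos_of_ne_zero fun h => by simp [h] at hmn
    have hnpos : 0 < g.natDegree := Nat.pos_of_ne_zero fun h => by simp [h] at hmn
    obtain ⟨α, hα⟩ := Multiset.card_pos_iff_exists_mem.mp (by rw [hcardf]; exact hmpos)
    obtain ⟨β, hβ⟩ := Multiset.card_pos_iff_exists_mem.mp (by rw [hcardg]; exact hnpos)
    have haev := hroot α hα β hβ
    have hminF : minpoly Fq (α + β) = F :=
      (minpoly.eq_of_irreducible_of_monic hFirr haev hFmonic).symm
    set a := (minpoly Fq α).natDegree with ha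
    set b := (minpoly Fq β).natDegree with hb
    have hapos : 0 < a := minpoly.natDegree_pos (Algebra.IsIntegral.isIntegral α)
    have hbpos : 0 < b := minpoly.natDegree_pos (Algebra.IsIntegral.isIntegral β)
    have haf : minpoly Fq α ∣ f := minpoly.dvd Fq α (aeval_eq_zero_of_mem_acRoots hα)
    have hbg : minpoly Fq β ∣ g := minpoly.dvd Fq β (aeval_eq_zero_of_mem_acRoots hβ)
    have ham : a ≤ f.natDegree := natDegree_le_of_dvd haf hf.ne_zero
    have hbn : b ≤ g.natDegree := natDegree_le_of_dvd hbg hg.ne_zero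
    have hl : (α + β) ^ q ^ (Nat.lcm a b) = α + β := by
      rw [ac_add_pow,
        (pow_card_pow_eq_iff α _).mpr (Nat.dvd_lcm_left a b),
        (pow_card_pow_eq_iff β _).mpr (Nat.dvd_lcm_right a b)]
    have hmnlcm : f.natDegree * g.natDegree ∣ Nat.lcm a b := by
      have h7 := (pow_card_pow_eq_iff (α + β) _).mp hl
      rwa [hminF, hFdeg] at h7
    have hlcmab : Nat.lcm a b ∣ a * b := Nat.lcm_dvd (dvd_mul_right a b) (dvd_mul_left b a)
    have hab_le : a * b ≤ f.natDegree * g.natDegree := Nat.mul_le_mul ham hbn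
    have hlcm_pos : 0 < Nat.lcm a b := Nat.lcm_pos hapos hbpos
    have h8 : f.natDegree * g.natDegree ≤ Nat.lcm a b := Nat.le_of_dvd hlcm_pos hmnlcm
    have h9 : Nat.lcm a b ≤ a * b := Nat.le_of_dvd (by positivity) hlcmab
    have hab_eq : a * b = f.natDegree * g.natDegree := by omega
    have hlcm_eq : Nat.lcm a b = a * b := by omega
    have ha_eq : a = f.natDegree := by
      by_contra hne
      have hlt : a < f.natDegree := lt_of_le_of_ne ham hne
      have hcon : a * b < f.natDegree * g.natDegree := by
        calc a * b ≤ a * g.natDegree := Nat.mul_le_mul_left a hbn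
        _ < f.natDegree * g.natDegree := by
            exact Nat.mul_lt_mul_of_lt_of_le hlt (le_refl _) hnpos
      omega
    have hb_eq : b = g.natDegree := by
      by_contra hne
      have hlt : b < g.natDegree := lt_of_le_of_ne hbn hne
      have hcon : a * b < f.natDegree * g.natDegree := by
        calc a * b ≤ f.natDegree * b := Nat.mul_le_mul_right b ham
        _ < f.natDegree * g.natDegree := by
            exact Nat.mul_lt_mul_of_le_of_lt (le_refl _) hlt hmpos
      omega
    have hfeq : f = minpoly Fq α :=
      eq_of_monic_of_dvd_of_natDegree_le
        (minpoly.monic (Algebra.IsIntegral.isIntegral α)) hf haf (le_of_eq ha_eq.symm)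
    have hgeq : g = minpoly Fq β :=
      eq_of_monic_of_dvd_of_natDegree_le
        (minpoly.monic (Algebra.IsIntegral.isIntegral β)) hg hbg (le_of_eq hb_eq.symm)
    have hgcd : Nat.gcd a b = 1 := by
      have h10 := Nat.gcd_mul_lcm a b
      rw [hlcm_eq] at h10
      have habpos : 0 < a * b := by positivity
      have h11 : a.gcd b * (a * b) = 1 * (a * b) := by rw [one_mul, h10]
      exact Nat.eq_of_mul_eq_mul_right habpos h11
    have hcop : Nat.Coprime a b := hgcd
    rw [ha_eq, hb_eq] at hcop
    exact ⟨hfeq ▸ minpoly.irreducible (Algebra.IsIntegral.isIntegral α),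
      hgeq ▸ minpoly.irreducible (Algebra.IsIntegral.isIntegral β), hcop⟩
  · rintro ⟨hfi, hgi, hco⟩
    have hmpos : 0 < f.natDegree :=
      natDegree_pos_iff_degree_pos.mpr (degree_pos_of_irreducible hfi)
    have hnpos : 0 < g.natDegree :=
      natDegree_pos_iff_degree_pos.mpr (degree_pos_of_irreducible hgi)
    obtain ⟨α, hα⟩ := Multiset.card_pos_iff_exists_mem.mp (by rw [hcardf]; exact hmpos)
    obtain ⟨β, hβ⟩ := Multiset.card_pos_iff_exists_mem.mp (by rw [hcardg]; exact hnpos)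
    have hminα : minpoly Fq α = f :=
      (minpoly.eq_of_irreducible_of_monic hfi (aeval_eq_zero_of_mem_acRoots hα) hf).symm
    have hminβ : minpoly Fq β = g :=
      (minpoly.eq_of_irreducible_of_monic hgi (aeval_eq_zero_of_mem_acRoots hβ) hg).symm
    have hdadd : (minpoly Fq (α + β)).natDegree = f.natDegree * g.natDegree :=
      minpoly_add_natDegree (by rw [hminα]) (by rw [hminβ]) hco
    have hdvdF : minpoly Fq (α + β) ∣ F := minpoly.dvd Fq _ (hroot α hα β hβ)
    have hFeq : F = minpoly Fq (α + β) :=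
      eq_of_monic_of_dvd_of_natDegree_le
        (minpoly.monic (Algebra.IsIntegral.isIntegral _)) hFmonic hdvdF
        (by rw [hFdeg, hdadd])
    rw [hFeq]
    exact minpoly.irreducible (Algebra.IsIntegral.isIntegral _)
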